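/- Let X and Y be topological spaces, with X first-countable and Y Hausdorff and first-countable. Let f : X → Y be continuous, let S ⊆ X be closed, let b ∈ Y and a ∈ X, and assume S ∩ f^{-1}(b) = {a}. Then for any open sets V', V of X with a ∈ V' ⊆ V and with the closure of V compact, there exists an open neighborhood W of b in Y such that f(V ∩ S) ∩ W = f(V' ∩ S) ∩ W. In other words, the image of the restriction f|_S is well-defined as a germ at b. -/

import Mathlib

/-- If `S ∩ f⁻¹(b) = {a}` then the image of the restriction `f|_S` is well-defined
as a germ at `b`: for nested relatively compact open neighbourhoods `V' ⊆ V` of `a`,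
the images `f(V ∩ S)` and `f(V' ∩ S)` agree near `b`. -/
theorem stmt_1 {X Y : Type*} [TopologicalSpace X] [TopologicalSpace Y]
    [FirstCountableTopology X] [T2Space Y] [FirstCountableTopology Y]
    (f : X → Y) (hf : Continuous f) (S : Set X) (hS : IsClosed S)
    (b : Y) (a : X) (hfib : S ∩ f ⁻¹' {b} = {a})
    (V' V : Set X) (hV' : IsOpen V') (hV : IsOpen V)
    (haV' : a ∈ V') (hsub : V' ⊆ V) (hcpt : IsCompact (closure V)) :
    ∃ W : Set Y, IsOpen W ∧ b ∈ W ∧ f '' (V ∩ S) ∩ W = f '' (V' ∩ S) ∩ W := by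
  set K : Set X := S ∩ (closure V \ V') with hK
  have hKcpt : IsCompact K := by
    apply hcpt.of_isClosed_subset (hS.inter (isClosed_closure.inter hV'.isClosed_compl))
    exact fun x hx => hx.2.1
  have hKimg : IsCompact (f '' K) := hKcpt.image hf
  refine ⟨(f '' K)ᶜ, hKimg.isClosed.isOpen_compl, ?_, ?_⟩
  · intro hb
    obtain ⟨x, hxK, hfx⟩ := hb
    have : x ∈ S ∩ f ⁻¹' {b} := ⟨hxK.1, hfx⟩
    rw [hfib] at this
    exact hxK.2.2 (this ▸ haV')
  · apply Set.Subset.antisymm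
    · rintro y ⟨⟨x, ⟨hxV, hxS⟩, rfl⟩, hyW⟩
      refine ⟨⟨x, ⟨?_, hxS⟩, rfl⟩, hyW⟩
      by_contra hxV'
      exact hyW ⟨x, ⟨hxS, subset_closure hxV, hxV'⟩, rfl⟩
    · exact Set.inter_subset_inter_left _ (Set.image_mono (f := f) (Set.inter_subset_inter_left _ hsub))
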